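/- Let α₁, α₂, α₃ be pairwise coprime positive integers and β₁, β₂ positive integers with α₁β₁ + α₂β₂ = α₁α₂ + α₃. Set d := gcd(α₁ + 2β₂, α₂ + 2β₁). Then gcd(d, β₁) = 1 and gcd(d, β₂) = 1. -/
import Mathlib


/-- With α₁, α₂, α₃ pairwise coprime positive integers and β₁, β₂ positive with
α₁β₁ + α₂β₂ = α₁α₂ + α₃, the number d = gcd(α₁ + 2β₂, α₂ + 2β₁) satisfies
gcd(d, β₁) = 1 and gcd(d, β₂) = 1. -/
theorem gcd_coprime_beta (α₁ α₂ α₃ β₁ β₂ : ℕ) (h₁ : 0 < α₁) (h₂ : 0 < α₂) (h₃ : 0 < α₃)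
    (hβ₁ : 0 < β₁) (hβ₂ : 0 < β₂)
    (h₁₂ : Nat.Coprime α₁ α₂) (h₁₃ : Nat.Coprime α₁ α₃) (h₂₃ : Nat.Coprime α₂ α₃)
    (heq : α₁ * β₁ + α₂ * β₂ = α₁ * α₂ + α₃) :
    Nat.Coprime (Nat.gcd (α₁ + 2 * β₂) (α₂ + 2 * β₁)) β₁ ∧
      Nat.Coprime (Nat.gcd (α₁ + 2 * β₂) (α₂ + 2 * β₁)) β₂ := by
  constructor
  · rw [Nat.coprime_iff_gcd_eq_one]
    by_contra hne
    obtain ⟨p, hp, hpd⟩ := Nat.exists_prime_and_dvd hne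
    have hpb₁ : p ∣ β₁ := hpd.trans (Nat.gcd_dvd_right _ _)
    have hp2 : p ∣ α₂ + 2 * β₁ :=
      (hpd.trans (Nat.gcd_dvd_left _ _)).trans (Nat.gcd_dvd_right _ _)
    have hpα₂ : p ∣ α₂ := by
      have := Nat.dvd_sub hp2 (hpb₁.mul_left 2)
      simpa using this
    have hpl : p ∣ α₁ * α₂ + α₃ := by
      rw [← heq]; exact Nat.dvd_add (hpb₁.mul_left _) (hpα₂.mul_right _)
    have hpα₃ : p ∣ α₃ := (Nat.dvd_add_right (hpα₂.mul_left _)).mp hpl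
    exact Nat.Prime.one_lt hp |>.ne' (Nat.eq_one_of_dvd_coprimes h₂₃ hpα₂ hpα₃)
  · rw [Nat.coprime_iff_gcd_eq_one]
    by_contra hne
    obtain ⟨p, hp, hpd⟩ := Nat.exists_prime_and_dvd hne
    have hpb₂ : p ∣ β₂ := hpd.trans (Nat.gcd_dvd_right _ _)
    have hp1 : p ∣ α₁ + 2 * β₂ :=
      (hpd.trans (Nat.gcd_dvd_left _ _)).trans (Nat.gcd_dvd_left _ _)
    have hpα₁ : p ∣ α₁ := by
      have := Nat.dvd_sub hp1 (hpb₂.mul_left 2)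
      simpa using this
    have hpl : p ∣ α₁ * α₂ + α₃ := by
      rw [← heq]; exact Nat.dvd_add (hpα₁.mul_right _) (hpb₂.mul_left _)
    have hpα₃ : p ∣ α₃ := (Nat.dvd_add_right (hpα₁.mul_right _)).mp hpl
    exact Nat.Prime.one_lt hp |>.ne' (Nat.eq_one_of_dvd_coprimes h₁₃ hpα₁ hpα₃)
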